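/- arXiv:1004.1309 — 3 statements merged into one kernel-verified Lean document; each statement's English description precedes it below -/
import Mathlib

section
/- For every α ∈ (0, π) and θ ∈ [0,1], the kernel k_{α,θ}(u,t) := √u · (u/t)^θ · ((t/u)^{π/(2α)} / ((t/u)^{π/α} + 1)) · (1/u) satisfies sup_{u>0} ∫_0^∞ √t · |∂k_{α,θ}/∂t (u,t)| dt < ∞. -/
open MeasureTheory Real Set

/-- The kernel `k_α(u,t) = (t/u)^(π/(2α)) / ((t/u)^(π/α) + 1) · (1/u)`. -/
noncomputable def kAlpha (α u t : ℝ) : ℝ :=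
  (t / u) ^ (π / (2 * α)) / ((t / u) ^ (π / α) + 1) * (1 / u)

/-- The kernel `k_{α,θ}(u,t) = √u · (u/t)^θ · k_α(u,t)`. -/
noncomputable def kAlphaTheta (α θ u t : ℝ) : ℝ :=
  Real.sqrt u * (u / t) ^ θ * kAlpha α u t

private lemma g_hasDerivAt (a b : ℝ) {s : ℝ} (hs : 0 < s) :
    HasDerivAt (fun x : ℝ => x ^ a / (x ^ b + 1))
      ((a * s ^ (a - 1) * (s ^ b + 1) - s ^ a * (b * s ^ (b - 1))) / (s ^ b + 1) ^ 2) s := by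
  have h1 : HasDerivAt (fun x : ℝ => x ^ a) (a * s ^ (a - 1)) s :=
    Real.hasDerivAt_rpow_const (Or.inl hs.ne')
  have h2 : HasDerivAt (fun x : ℝ => x ^ b + 1) (b * s ^ (b - 1)) s :=
    (Real.hasDerivAt_rpow_const (Or.inl hs.ne')).add_const 1
  exact h1.div h2 (by positivity)

private lemma gderiv_bound (a b : ℝ) {s : ℝ} (hs : 0 < s) (hb : 0 ≤ b) :
    |(a * s ^ (a - 1) * (s ^ b + 1) - s ^ a * (b * s ^ (b - 1))) / (s ^ b + 1) ^ 2|
      ≤ (|a| + b) * (s ^ (a - 1) / (s ^ b + 1)) := by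
  have hP : (0:ℝ) < s ^ (a - 1) := Real.rpow_pos_of_pos hs _
  have hQ : (0:ℝ) < s ^ b := Real.rpow_pos_of_pos hs _
  have hD : (0:ℝ) < s ^ b + 1 := by linarith
  have e : s ^ a * s ^ (b - 1) = s ^ (a - 1) * s ^ b := by
    rw [← Real.rpow_add hs, ← Real.rpow_add hs]; congr 1; ring
  have key : |a * s ^ (a - 1) * (s ^ b + 1) - s ^ a * (b * s ^ (b - 1))|
      ≤ (|a| + b) * s ^ (a - 1) * (s ^ b + 1) := by
    have h1 : |a * s ^ (a - 1) * (s ^ b + 1)| = |a| * (s ^ (a - 1) * (s ^ b + 1)) := by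
      rw [abs_mul, abs_mul, abs_of_pos hP, abs_of_pos hD]; ring
    have h2 : |s ^ a * (b * s ^ (b - 1))| = b * (s ^ (a - 1) * s ^ b) := by
      rw [show s ^ a * (b * s ^ (b - 1)) = b * (s ^ a * s ^ (b - 1)) by ring, e,
        abs_mul, abs_of_nonneg hb, abs_of_pos (by positivity)]
    refine (abs_sub _ _).trans ?_
    rw [h1, h2]
    nlinarith [abs_nonneg a]
  rw [abs_div, abs_of_pos (by positivity : (0:ℝ) < (s ^ b + 1) ^ 2),
    div_le_iff₀ (by positivity : (0:ℝ) < (s ^ b + 1) ^ 2)]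
  calc |a * s ^ (a - 1) * (s ^ b + 1) - s ^ a * (b * s ^ (b - 1))|
      ≤ (|a| + b) * s ^ (a - 1) * (s ^ b + 1) := key
    _ = (|a| + b) * (s ^ (a - 1) / (s ^ b + 1)) * (s ^ b + 1) ^ 2 := by
        field_simp

private lemma phi_integrable {b c : ℝ} (hc : -1 < c) (hcb : c - b < -1) :
    MeasureTheory.IntegrableOn (fun s : ℝ => s ^ c / (s ^ b + 1)) (Set.Ioi (0:ℝ)) := by
  have hcont : ContinuousOn (fun s : ℝ => s ^ c / (s ^ b + 1)) (Set.Ioi (0:ℝ)) := by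
    apply ContinuousOn.div
    · exact fun s hs => (Real.continuousAt_rpow_const s c (Or.inl (ne_of_gt hs))).continuousWithinAt
    · exact fun s hs =>
        ((Real.continuousAt_rpow_const s b (Or.inl (ne_of_gt hs))).add
          continuousAt_const).continuousWithinAt
    · intro s hs
      have : (0:ℝ) < s ^ b := Real.rpow_pos_of_pos hs _
      linarith
  rw [← Set.Ioo_union_Ici_eq_Ioi (zero_lt_one : (0:ℝ) < 1)]
  apply MeasureTheory.IntegrableOn.union
  · refine Integrable.mono' ((intervalIntegral.integrableOn_Ioo_rpow_iff one_pos).2 hc)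
      ((hcont.mono Set.Ioo_subset_Ioi_self).aestronglyMeasurable measurableSet_Ioo) ?_
    filter_upwards [ae_restrict_mem measurableSet_Ioo] with s hs
    have hs0 : 0 < s := hs.1
    have hQ : (0:ℝ) < s ^ b := Real.rpow_pos_of_pos hs0 _
    rw [Real.norm_eq_abs, abs_of_nonneg (by positivity)]
    exact div_le_self (Real.rpow_nonneg hs0.le c) (by linarith)
  · rw [integrableOn_Ici_iff_integrableOn_Ioi]
    refine Integrable.mono' (integrableOn_Ioi_rpow_of_lt hcb one_pos)
      ((hcont.mono (Set.Ioi_subset_Ioi zero_le_one)).aestronglyMeasurable measurableSet_Ioi) ?_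
    filter_upwards [ae_restrict_mem measurableSet_Ioi] with s hs
    have hs0 : (0:ℝ) < s := lt_trans one_pos hs
    have hQ : (0:ℝ) < s ^ b := Real.rpow_pos_of_pos hs0 _
    rw [Real.norm_eq_abs, abs_of_nonneg (by positivity), Real.rpow_sub hs0]
    gcongr
    linarith

/-- for every `α ∈ (0,π)` and `θ ∈ [0,1]`,
`sup_{u>0} ∫_0^∞ √t · |∂k_{α,θ}/∂t (u,t)| dt < ∞`. -/
theorem kernel_derivative_uniform_integral_bound
    (α θ : ℝ) (hα : α ∈ Set.Ioo 0 π) (hθ : θ ∈ Set.Icc (0:ℝ) 1) :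
    ∃ C : ℝ, ∀ u : ℝ, 0 < u →
      ∫⁻ t in Set.Ioi (0:ℝ),
          ENNReal.ofReal (Real.sqrt t * |deriv (fun t => kAlphaTheta α θ u t) t|)
        ≤ ENNReal.ofReal C := by
  obtain ⟨hα0, hαπ⟩ := hα
  obtain ⟨hθ0, hθ1⟩ := hθ
  have hπ : 0 < π := Real.pi_pos
  set p : ℝ := π / (2 * α) with hp_def
  set b : ℝ := π / α with hb_def
  have hp : 1 / 2 < p := by
    rw [hp_def, lt_div_iff₀ (by linarith : (0:ℝ) < 2 * α)]; linarith
  have hb2p : b = 2 * p := by rw [hp_def, hb_def]; field_simp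
  set a : ℝ := p - θ with ha_def
  set c : ℝ := a - 1 / 2 with hc_def
  have hb0 : 0 < b := by rw [hb2p]; linarith
  have hc1 : -1 < c := by rw [hc_def, ha_def]; linarith
  have hcb : c - b < -1 := by rw [hc_def, ha_def, hb2p]; linarith
  set φ : ℝ → ℝ := fun s => s ^ c / (s ^ b + 1) with hφ_def
  have hφ_int : IntegrableOn φ (Ioi (0:ℝ)) := phi_integrable hc1 hcb
  set M : ℝ := |a| + b with hM_def
  have hM0 : 0 ≤ M := by rw [hM_def]; positivity
  refine ⟨M * ∫ s in Ioi (0:ℝ), φ s, fun u hu => ?_⟩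
  -- Pointwise bound on the derivative
  have key : ∀ t ∈ Ioi (0:ℝ),
      Real.sqrt t * |deriv (fun t => kAlphaTheta α θ u t) t|
        ≤ u⁻¹ * (M * ((t / u) ^ c / ((t / u) ^ b + 1))) := by
    intro t ht
    rw [mem_Ioi] at ht
    have hs : 0 < t / u := div_pos ht hu
    -- the kernel agrees with a rescaled profile on `Ioi 0`
    have hEq : ∀ x ∈ Ioi (0:ℝ),
        kAlphaTheta α θ u x = u ^ (-(1/2) : ℝ) * ((x / u) ^ a / ((x / u) ^ b + 1)) := by
      intro x hx
      rw [mem_Ioi] at hx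
      have hsx : 0 < x / u := div_pos hx hu
      have e1 : (u / x) ^ θ = (x / u) ^ (-θ) := by
        rw [← inv_div, Real.inv_rpow hsx.le, ← Real.rpow_neg hsx.le]
      have e2 : (x / u) ^ (-θ) * (x / u) ^ p = (x / u) ^ a := by
        rw [← Real.rpow_add hsx]; congr 1; rw [ha_def]; ring
      have e3 : Real.sqrt u * (1 / u) = u ^ (-(1/2) : ℝ) := by
        rw [Real.sqrt_eq_rpow,
          show (1:ℝ)/u = u ^ (-1 : ℝ) by rw [Real.rpow_neg_one, one_div],
          ← Real.rpow_add hu]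
        norm_num
      rw [kAlphaTheta, kAlpha, ← hp_def, ← hb_def, e1, ← e2, ← e3]
      ring
    set D : ℝ := (a * (t/u) ^ (a - 1) * ((t/u) ^ b + 1) - (t/u) ^ a * (b * (t/u) ^ (b - 1)))
        / ((t/u) ^ b + 1) ^ 2 with hD_def
    have hg : HasDerivAt (fun x : ℝ => x ^ a / (x ^ b + 1)) D (t / u) := g_hasDerivAt a b hs
    have hdiv : HasDerivAt (fun x : ℝ => x / u) (1 / u) t := by
      simpa using (hasDerivAt_id t).div_const u
    have hcomp : HasDerivAt (fun x : ℝ => (x / u) ^ a / ((x / u) ^ b + 1)) (D * (1 / u)) t :=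
      by have := hg.comp t hdiv; exact this
    have hfull := hcomp.const_mul (u ^ (-(1/2) : ℝ))
    have hK : HasDerivAt (fun x => kAlphaTheta α θ u x)
        (u ^ (-(1/2) : ℝ) * (D * (1 / u))) t :=
      hfull.congr_of_eventuallyEq (Filter.eventually_of_mem (Ioi_mem_nhds ht) hEq)
    rw [hK.deriv]
    have hDb : |D| ≤ M * ((t / u) ^ (a - 1) / ((t / u) ^ b + 1)) := by
      rw [hD_def, hM_def]; exact gderiv_bound a b hs hb0.le
    have hupos : (0:ℝ) < u ^ (-(1/2) : ℝ) := Real.rpow_pos_of_pos hu _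
    have habs : |u ^ (-(1/2) : ℝ) * (D * (1 / u))| = u ^ (-(1/2) : ℝ) * |D| * (1 / u) := by
      rw [abs_mul, abs_mul, abs_of_pos hupos, abs_of_pos (by positivity : (0:ℝ) < 1 / u)]
      ring
    have e4 : Real.sqrt t * u ^ (-(1/2) : ℝ) = (t / u) ^ ((1:ℝ)/2) := by
      rw [Real.sqrt_eq_rpow, Real.rpow_neg hu.le, Real.div_rpow ht.le hu.le]
      ring
    have e5 : (t / u) ^ ((1:ℝ)/2) * (t / u) ^ (a - 1) = (t / u) ^ c := by
      rw [← Real.rpow_add hs]; congr 1; rw [hc_def]; ring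
    have h12 : (0:ℝ) < (t / u) ^ ((1:ℝ)/2) := Real.rpow_pos_of_pos hs _
    calc Real.sqrt t * |u ^ (-(1/2) : ℝ) * (D * (1 / u))|
        = (Real.sqrt t * u ^ (-(1/2) : ℝ)) * |D| * (1 / u) := by rw [habs]; ring
      _ = (t / u) ^ ((1:ℝ)/2) * |D| * (1 / u) := by rw [e4]
      _ ≤ (t / u) ^ ((1:ℝ)/2) * (M * ((t / u) ^ (a - 1) / ((t / u) ^ b + 1))) * (1 / u) := by
          gcongr
      _ = u⁻¹ * (M * (((t / u) ^ ((1:ℝ)/2) * (t / u) ^ (a - 1)) / ((t / u) ^ b + 1))) := by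
          ring
      _ = u⁻¹ * (M * ((t / u) ^ c / ((t / u) ^ b + 1))) := by rw [e5]
  -- the comparison function is integrable with integral `M * ∫ φ`
  have hu' : (0:ℝ) < u⁻¹ := inv_pos.2 hu
  have hcomp_int : IntegrableOn (fun x : ℝ => φ (u⁻¹ * x)) (Ioi (0:ℝ)) := by
    refine (integrableOn_Ioi_comp_mul_left_iff φ 0 hu').2 ?_
    simpa using hφ_int
  have hint : IntegrableOn (fun t : ℝ => u⁻¹ * (M * φ (u⁻¹ * t))) (Ioi (0:ℝ)) :=
    ((hcomp_int.const_mul M).const_mul u⁻¹)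
  have hIeq : (∫ t in Ioi (0:ℝ), u⁻¹ * (M * φ (u⁻¹ * t)))
      = M * ∫ s in Ioi (0:ℝ), φ s := by
    rw [integral_const_mul, integral_const_mul,
      integral_comp_mul_left_Ioi φ 0 hu', inv_inv, mul_zero, smul_eq_mul]
    field_simp
  calc ∫⁻ t in Ioi (0:ℝ),
        ENNReal.ofReal (Real.sqrt t * |deriv (fun t => kAlphaTheta α θ u t) t|)
      ≤ ∫⁻ t in Ioi (0:ℝ), ENNReal.ofReal (u⁻¹ * (M * φ (u⁻¹ * t))) := by
        refine lintegral_mono_ae ?_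
        filter_upwards [ae_restrict_mem measurableSet_Ioi] with t ht
        apply ENNReal.ofReal_le_ofReal
        have := key t ht
        rwa [hφ_def, show u⁻¹ * t = t / u by rw [inv_mul_eq_div]]
    _ = ENNReal.ofReal (∫ t in Ioi (0:ℝ), u⁻¹ * (M * φ (u⁻¹ * t))) := by
        refine (MeasureTheory.ofReal_integral_eq_lintegral_ofReal hint ?_).symm
        filter_upwards [ae_restrict_mem measurableSet_Ioi] with t ht
        rw [mem_Ioi] at ht
        have h1 : (0:ℝ) < u⁻¹ * t := by positivity
        have h2 : (0:ℝ) ≤ φ (u⁻¹ * t) := by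
          rw [hφ_def]
          positivity
        positivity
    _ = ENNReal.ofReal (M * ∫ s in Ioi (0:ℝ), φ s) := by rw [hIeq]
end

section
/- If g : Σ_{π/2 + ε} → E is analytic and bounded on the sector Σ_{π/2+ε} = {z ∈ ℂ \ {0}: |arg z| < π/2 + ε} for some ε > 0, where E is a complex Banach space, then for all t > 0, g(t) = (1/π) ∫_{-∞}^∞ (t/(t² + v²)) g(iv) dv. -/
open MeasureTheory Real Set Complex

/-- The open sector `Σ_σ = {z ∈ ℂ \ {0} : |arg z| < σ}`. -/
def sector (σ : ℝ) : Set ℂ := {z : ℂ | z ≠ 0 ∧ |Complex.arg z| < σ}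

lemma isOpen_sectorS {m : ℝ} (hm : m ≤ π) :
    IsOpen {z : ℂ | z ≠ 0 ∧ |Complex.arg z| < m} := by
  have h : {z : ℂ | z ≠ 0 ∧ |Complex.arg z| < m}
      = Complex.slitPlane ∩ Complex.arg ⁻¹' (Set.Ioo (-m) m) := by
    ext z
    simp only [Set.mem_setOf_eq, Set.mem_inter_iff, Set.mem_preimage, Set.mem_Ioo, abs_lt]
    constructor
    · rintro ⟨hz, h1, h2⟩
      refine ⟨?_, h1, h2⟩
      rw [Complex.mem_slitPlane_iff]
      by_contra hc
      push_neg at hc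
      obtain ⟨hre, him⟩ := hc
      have hrene : z.re ≠ 0 := fun h0 => hz (Complex.ext h0 him)
      have : z.arg = π := Complex.arg_eq_pi_iff.2 ⟨lt_of_le_of_ne hre hrene, him⟩
      rw [this] at h2
      linarith
    · rintro ⟨hz, h1, h2⟩
      exact ⟨Complex.slitPlane_ne_zero hz, h1, h2⟩
  rw [h]
  exact ContinuousOn.isOpen_inter_preimage
    (fun z hz => (Complex.continuousAt_arg hz).continuousWithinAt)
    Complex.isOpen_slitPlane isOpen_Ioo

lemma cayley_re' {t : ℝ} {ζ : ℂ} :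
    ((t : ℂ) * (1 - ζ) / (1 + ζ)).re
      = t * (1 - Complex.normSq ζ) / Complex.normSq (1 + ζ) := by
  rw [Complex.div_re, ← add_div]
  congr 1
  simp only [Complex.mul_re, Complex.mul_im, Complex.sub_re, Complex.sub_im, Complex.one_re,
    Complex.one_im, Complex.ofReal_re, Complex.ofReal_im, Complex.add_re, Complex.add_im,
    Complex.normSq_apply]
  ring

lemma cayley_mem {t : ℝ} (ht : 0 < t) {m : ℝ} (hm : π / 2 < m) {ζ : ℂ}
    (h1 : Complex.normSq ζ ≤ 1) (h2 : ζ ≠ 1) (h3 : 1 + ζ ≠ 0) :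
    (t : ℂ) * (1 - ζ) / (1 + ζ) ∈ {z : ℂ | z ≠ 0 ∧ |Complex.arg z| < m} := by
  refine ⟨?_, lt_of_le_of_lt (Complex.abs_arg_le_pi_div_two_iff.2 ?_) hm⟩
  · apply div_ne_zero _ h3
    apply mul_ne_zero
    · exact_mod_cast ht.ne'
    · intro h
      exact h2 (by linear_combination -h)
  · rw [cayley_re']
    apply div_nonneg _ (Complex.normSq_nonneg _)
    have h4 : 0 ≤ 1 - Complex.normSq ζ := by linarith
    positivity

lemma exp_neg_two_arctan {t : ℝ} (ht : 0 < t) (v : ℝ) :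
    Complex.exp (↑(-2 * Real.arctan (v / t)) * Complex.I)
      = ((t : ℂ) - v * Complex.I) / ((t : ℂ) + v * Complex.I) := by
  set x := v / t with hx
  have h1 : (0:ℝ) < 1 + x ^ 2 := by positivity
  have h2 : (0:ℝ) < t ^ 2 + v ^ 2 := by positivity
  have hc2 : Real.cos (2 * Real.arctan x) = (t ^ 2 - v ^ 2) / (t ^ 2 + v ^ 2) := by
    rw [Real.cos_two_mul, Real.cos_arctan, div_pow, one_pow, Real.sq_sqrt h1.le, hx]
    field_simp
    ring
  have hs2 : Real.sin (2 * Real.arctan x) = 2 * t * v / (t ^ 2 + v ^ 2) := by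
    rw [Real.sin_two_mul, Real.cos_arctan, Real.sin_arctan]
    have hsq : Real.sqrt (1 + x ^ 2) * Real.sqrt (1 + x ^ 2) = 1 + x ^ 2 :=
      Real.mul_self_sqrt h1.le
    rw [show 2 * (x / Real.sqrt (1 + x ^ 2)) * (1 / Real.sqrt (1 + x ^ 2))
        = 2 * x / (Real.sqrt (1 + x ^ 2) * Real.sqrt (1 + x ^ 2)) by ring, hsq, hx]
    field_simp
  have hden : ((t : ℂ) + v * Complex.I) ≠ 0 := by
    intro h
    have := congrArg Complex.re h
    simp at this
    exact ht.ne' this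
  have h2v : ((t:ℂ) ^ 2 + (v:ℂ) ^ 2) ≠ 0 := by
    have : (((t^2 + v^2 : ℝ)) : ℂ) ≠ 0 := Complex.ofReal_ne_zero.2 h2.ne'
    push_cast at this
    exact this
  rw [Complex.exp_mul_I, ← Complex.ofReal_cos, ← Complex.ofReal_sin]
  rw [show -2 * Real.arctan x = -(2 * Real.arctan x) by ring, Real.cos_neg, Real.sin_neg,
    hc2, hs2]
  rw [eq_div_iff hden]
  push_cast
  field_simp [h2v]
  ring_nf
  simp only [Complex.I_sq]
  ring

/-- Poisson formula for the right half-plane. If `g` is analytic and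
bounded on the sector `Σ_{π/2+ε}` for some `ε > 0`, then for all `t > 0`,
`g(t) = (1/π) ∫_{-∞}^∞ (t/(t²+v²)) g(iv) dv`. -/
theorem poisson_formula_half_plane
    {E : Type*} [NormedAddCommGroup E] [NormedSpace ℂ E] [CompleteSpace E]
    (ε : ℝ) (hε : 0 < ε)
    (g : ℂ → E)
    (hg_an : DifferentiableOn ℂ g (sector (π / 2 + ε)))
    (hg_bd : ∃ M : ℝ, ∀ z ∈ sector (π / 2 + ε), ‖g z‖ ≤ M)
    (t : ℝ) (ht : 0 < t) :
    g t = (1 / π) • ∫ v : ℝ, (t / (t ^ 2 + v ^ 2)) • g (Complex.I * (v : ℂ)) := by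
  obtain ⟨M, hM⟩ := hg_bd
  have hπ : (0:ℝ) < π := Real.pi_pos
  set m : ℝ := min (π / 2 + ε) π with hmdef
  have hm1 : π / 2 < m := lt_min (by linarith) (by linarith)
  have hm2 : m ≤ π := min_le_right _ _
  set S : Set ℂ := {z : ℂ | z ≠ 0 ∧ |Complex.arg z| < m} with hSdef
  have hSopen : IsOpen S := isOpen_sectorS hm2
  have hSsub : S ⊆ sector (π / 2 + ε) := fun z hz => ⟨hz.1, lt_of_lt_of_le hz.2 (min_le_left _ _)⟩
  have hgd : ∀ z ∈ S, DifferentiableAt ℂ g z := fun z hz =>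
    (hg_an.mono hSsub).differentiableAt (hSopen.mem_nhds hz)
  set w : ℂ → ℂ := fun ζ => (t : ℂ) * (1 - ζ) / (1 + ζ) with hwdef
  have hwmem : ∀ ζ : ℂ, Complex.normSq ζ ≤ 1 → ζ ≠ 1 → 1 + ζ ≠ 0 → w ζ ∈ S :=
    fun ζ h1 h2 h3 => cayley_mem ht hm1 h1 h2 h3
  have hball : ∀ ζ : ℂ, ‖ζ‖ < 1 → (Complex.normSq ζ ≤ 1 ∧ ζ ≠ 1 ∧ 1 + ζ ≠ 0) := by
    intro ζ hζ
    have h1 : Complex.normSq ζ < 1 := by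
      rw [← Complex.sq_norm]
      nlinarith [norm_nonneg ζ]
    refine ⟨h1.le, ?_, ?_⟩
    · rintro rfl
      simp [Complex.normSq] at h1
    · intro h
      have h5 : ζ = -1 := by linear_combination h
      rw [h5] at h1
      simp at h1
  have hwd : ∀ ζ : ℂ, ‖ζ‖ < 1 → DifferentiableAt ℂ w ζ := by
    intro ζ hζ
    exact ((differentiableAt_const _).mul ((differentiableAt_const _).sub differentiableAt_id)).div
      ((differentiableAt_const _).add differentiableAt_id) (hball ζ hζ).2.2
  set F : ℝ → ℝ → E := fun ρ θ => g (w ((ρ:ℂ) * Complex.exp ((θ:ℂ) * Complex.I))) with hFdef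
  have stepA : ∀ ρ : ℝ, 0 < ρ → ρ < 1 →
      (∫ θ in (0:ℝ)..(2*π), F ρ θ) = (2*π : ℝ) • g t := by
    intro ρ h0 h1
    have hdiffcl : DiffContOnCl ℂ (fun ζ => g (w ζ)) (Metric.ball 0 ρ) := by
      apply DifferentiableOn.diffContOnCl
      rw [closure_ball (0:ℂ) h0.ne']
      intro ζ hζ
      have hζ1 : ‖ζ‖ < 1 := by
        rw [Metric.mem_closedBall, dist_zero_right] at hζ
        exact lt_of_le_of_lt hζ h1
      have hm := hwmem ζ (hball ζ hζ1).1 (hball ζ hζ1).2.1 (hball ζ hζ1).2.2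
      exact ((hgd _ hm).comp ζ (hwd ζ hζ1)).differentiableWithinAt
    have h0mem : (0:ℂ) ∈ Metric.ball (0:ℂ) ρ := by simpa using h0
    have key := hdiffcl.circleIntegral_sub_inv_smul h0mem
    simp only [circleIntegral] at key
    have hinteg : ∀ θ : ℝ, deriv (circleMap 0 ρ) θ •
        ((circleMap 0 ρ θ - 0)⁻¹ • g (w (circleMap 0 ρ θ))) = Complex.I • F ρ θ := by
      intro θ
      rw [deriv_circleMap, sub_zero, smul_smul]
      have hne : circleMap 0 ρ θ ≠ 0 := circleMap_ne_center h0.ne'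
      rw [mul_comm (circleMap 0 ρ θ) Complex.I, mul_assoc, mul_inv_cancel₀ hne, mul_one]
      have : circleMap 0 ρ θ = (ρ:ℂ) * Complex.exp ((θ:ℂ) * Complex.I) := by simp [circleMap]
      rw [this]
    simp only [hinteg] at key
    rw [intervalIntegral.integral_smul] at key
    have hw0 : w 0 = (t:ℂ) := by simp [hwdef]
    rw [hw0] at key
    have key2 := congrArg (fun x => (Complex.I)⁻¹ • x) key
    rw [inv_smul_smul₀ Complex.I_ne_zero, smul_smul] at key2
    have hcoef : (Complex.I)⁻¹ * (2 * ↑π * Complex.I) = ((2*π : ℝ) : ℂ) := by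
      rw [Complex.inv_I]
      push_cast
      linear_combination (-2*(π:ℂ)) * Complex.I_sq
    rw [hcoef] at key2
    rw [key2]
    rfl
  -- helpers
  have habs : ∀ ρ θ : ℝ, 0 < ρ → ρ < 1 →
      ‖(ρ:ℂ) * Complex.exp ((θ:ℂ) * Complex.I)‖ < 1 := by
    intro ρ θ h0 h1
    rw [norm_mul, Complex.norm_exp_ofReal_mul_I, mul_one, Complex.norm_real, Real.norm_eq_abs, abs_of_pos h0]
    exact h1
  have hFcont : ∀ ρ : ℝ, 0 < ρ → ρ < 1 → Continuous (F ρ) := by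
    intro ρ h0 h1
    rw [continuous_iff_continuousAt]
    intro θ
    have hc1 : ContinuousAt (fun θ : ℝ => (ρ:ℂ) * Complex.exp ((θ:ℂ) * Complex.I)) θ := by
      fun_prop
    have ha := habs ρ θ h0 h1
    exact ContinuousAt.comp (x := θ) (g := g)
      (f := fun θ : ℝ => w ((ρ:ℂ) * Complex.exp ((θ:ℂ) * Complex.I)))
      (hgd _ (hwmem _ (hball _ ha).1 (hball _ ha).2.1 (hball _ ha).2.2)).continuousAt
      (ContinuousAt.comp (x := θ) (g := w)
        (f := fun θ : ℝ => (ρ:ℂ) * Complex.exp ((θ:ℂ) * Complex.I))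
        ((hwd _ ha).continuousAt) hc1)
  have hFbound : ∀ ρ : ℝ, 0 < ρ → ρ < 1 → ∀ θ : ℝ, ‖F ρ θ‖ ≤ M := by
    intro ρ h0 h1 θ
    have ha := habs ρ θ h0 h1
    exact hM _ (hSsub (hwmem _ (hball _ ha).1 (hball _ ha).2.1 (hball _ ha).2.2))
  set ρseq : ℕ → ℝ := fun n => 1 - (1/2 : ℝ) ^ (n+1) with hρdef
  have hρhalf : ∀ n : ℕ, ((1:ℝ)/2) ^ (n+1) ≤ 1/2 := by
    intro n
    calc ((1:ℝ)/2) ^ (n+1) ≤ (1/2) ^ 1 :=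
      pow_le_pow_of_le_one (by norm_num) (by norm_num) (by omega)
    _ = 1/2 := pow_one _
  have hρ0 : ∀ n, 0 < ρseq n := by
    intro n
    have := hρhalf n
    simp only [hρdef]
    linarith
  have hρ1 : ∀ n, ρseq n < 1 := by
    intro n
    have : (0:ℝ) < (1/2 : ℝ) ^ (n+1) := by positivity
    simp only [hρdef]
    linarith
  have hρlim : Filter.Tendsto ρseq Filter.atTop (nhds 1) := by
    have h : Filter.Tendsto (fun n : ℕ => (1/2:ℝ) ^ (n+1)) Filter.atTop (nhds 0) := by
      have := tendsto_pow_atTop_nhds_zero_of_lt_one (by norm_num : (0:ℝ) ≤ 1/2) (by norm_num)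
      exact this.comp (Filter.tendsto_add_atTop_nat 1)
    have h2 := Filter.Tendsto.const_sub (1:ℝ) h
    simp only [sub_zero] at h2
    exact h2
  -- membership at the boundary circle
  have hbmem : ∀ θ : ℝ, 0 < θ → θ ≤ 2*π → θ ≠ π → θ ≠ 2*π →
      (Complex.normSq (Complex.exp ((θ:ℂ)*Complex.I)) ≤ 1 ∧
        Complex.exp ((θ:ℂ)*Complex.I) ≠ 1 ∧ 1 + Complex.exp ((θ:ℂ)*Complex.I) ≠ 0) := by
    intro θ hθ0 hθle hθπ hθ2π
    refine ⟨?_, ?_, ?_⟩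
    · rw [Complex.normSq_eq_norm_sq, Complex.norm_exp_ofReal_mul_I]
      norm_num
    · intro hone
      rw [Complex.exp_eq_one_iff] at hone
      obtain ⟨n, hn⟩ := hone
      have him := congrArg Complex.im hn
      simp at him
      have h1 : (1:ℤ) ≤ n := by
        by_contra hc
        push_neg at hc
        have hc' : n ≤ 0 := by omega
        have : (n:ℝ) ≤ 0 := by exact_mod_cast hc'
        nlinarith
      have h2 : n ≤ 1 := by
        by_contra hc
        push_neg at hc
        have : (2:ℝ) ≤ (n:ℝ) := by exact_mod_cast hc
        nlinarith
      have hn1 : n = 1 := le_antisymm h2 h1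
      rw [hn1] at him
      apply hθ2π
      rw [him]
      push_cast
      ring
    · intro h
      have h' : Complex.exp ((θ:ℂ)*Complex.I) = Complex.exp ((π:ℂ)*Complex.I) := by
        rw [Complex.exp_pi_mul_I]
        linear_combination h
      rw [Complex.exp_eq_exp_iff_exists_int] at h'
      obtain ⟨n, hn⟩ := h'
      have him := congrArg Complex.im hn
      simp at him
      have h1 : (0:ℤ) ≤ n := by
        by_contra hc
        push_neg at hc
        have hc' : n ≤ -1 := by omega
        have : (n:ℝ) ≤ -1 := by exact_mod_cast hc'
        nlinarith
      have h2 : n ≤ 0 := by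
        by_contra hc
        push_neg at hc
        have : (1:ℝ) ≤ (n:ℝ) := by exact_mod_cast hc
        nlinarith
      have hn0 : n = 0 := le_antisymm h2 h1
      rw [hn0] at him
      apply hθπ
      rw [him]
      push_cast
      ring
  have hcontρ : ∀ θ : ℝ, 0 < θ → θ ≤ 2*π → θ ≠ π → θ ≠ 2*π →
      Filter.Tendsto (fun n => F (ρseq n) θ) Filter.atTop (nhds (F 1 θ)) := by
    intro θ h0 h2 h3 h4
    obtain ⟨hb1, hb2, hb3⟩ := hbmem θ h0 h2 h3 h4
    have hpt : ((1:ℝ):ℂ) * Complex.exp ((θ:ℂ)*Complex.I) = Complex.exp ((θ:ℂ)*Complex.I) := by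
      norm_num
    have hw_at : ContinuousAt w (Complex.exp ((θ:ℂ)*Complex.I)) := by
      apply ContinuousAt.div
      · fun_prop
      · fun_prop
      · exact hb3
    have hg_at : ContinuousAt g (w (Complex.exp ((θ:ℂ)*Complex.I))) :=
      (hgd _ (hwmem _ hb1 hb2 hb3)).continuousAt
    have hι : ContinuousAt (fun ρ : ℝ => (ρ:ℂ) * Complex.exp ((θ:ℂ)*Complex.I)) 1 := by
      fun_prop
    have hc : ContinuousAt (fun ρ : ℝ => F ρ θ) 1 := by
      refine ContinuousAt.comp (x := (1:ℝ))
        (g := g ∘ w) (f := fun ρ : ℝ => (ρ:ℂ) * Complex.exp ((θ:ℂ)*Complex.I)) ?_ hι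
      show ContinuousAt (g ∘ w) (((1:ℝ):ℂ) * Complex.exp ((θ:ℂ)*Complex.I))
      rw [hpt]
      exact hg_at.comp hw_at
    exact hc.tendsto.comp hρlim
  have hmain : (∫ θ in Set.Ioc (0:ℝ) (2*π), F 1 θ) = (2*π : ℝ) • g ↑t := by
    have hae : ∀ᵐ θ ∂(volume.restrict (Set.Ioc (0:ℝ) (2*π))), θ ∉ ({π, 2*π} : Set ℝ) := by
      apply Filter.Eventually.filter_mono (MeasureTheory.ae_mono Measure.restrict_le_self)
      have hz : volume ({π, 2*π} : Set ℝ) = 0 :=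
        (Set.toFinite _).measure_zero _
      exact MeasureTheory.compl_mem_ae_iff.2 hz
    have hlimae : ∀ᵐ θ ∂(volume.restrict (Set.Ioc (0:ℝ) (2*π))),
        Filter.Tendsto (fun n => F (ρseq n) θ) Filter.atTop (nhds (F 1 θ)) := by
      filter_upwards [hae, MeasureTheory.ae_restrict_mem measurableSet_Ioc] with θ hθ1 hθ2
      simp only [Set.mem_insert_iff, Set.mem_singleton_iff, not_or] at hθ1
      exact hcontρ θ hθ2.1 hθ2.2 hθ1.1 hθ1.2
    have hDCT := MeasureTheory.tendsto_integral_of_dominated_convergence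
      (μ := volume.restrict (Set.Ioc (0:ℝ) (2*π)))
      (F := fun n θ => F (ρseq n) θ) (f := F 1) (fun _ => M)
      (fun n => ((hFcont _ (hρ0 n) (hρ1 n)).aestronglyMeasurable))
      (integrable_const M)
      (fun n => Filter.Eventually.of_forall (fun θ => hFbound _ (hρ0 n) (hρ1 n) θ))
      hlimae
    have hconst : ∀ n, (∫ θ in Set.Ioc (0:ℝ) (2*π), F (ρseq n) θ) = (2*π:ℝ) • g ↑t := by
      intro n
      rw [← intervalIntegral.integral_of_le (by positivity : (0:ℝ) ≤ 2*π)]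
      exact stepA _ (hρ0 n) (hρ1 n)
    simp only [hconst] at hDCT
    exact tendsto_nhds_unique hDCT tendsto_const_nhds
  -- Step C: shift by periodicity
  have hper : Function.Periodic (F 1) (2*π) := by
    intro θ
    simp only [hFdef]
    congr 3
    push_cast
    rw [add_mul, Complex.exp_add]
    simp [Complex.exp_two_pi_mul_I]
  have hC : (∫ θ in (-π)..π, F 1 θ) = (2*π:ℝ) • g ↑t := by
    have hp := hper.intervalIntegral_add_eq (-π) 0
    rw [show -π + 2*π = π by ring, zero_add] at hp
    rw [hp, intervalIntegral.integral_of_le (by positivity : (0:ℝ) ≤ 2*π), hmain]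
  -- Step D: change of variables
  set φ : ℝ → ℝ := fun v => -2 * Real.arctan (v / t) with hφdef
  set φ' : ℝ → ℝ := fun v => -2 * (1 / (1 + (v/t)^2) * (1/t)) with hφ'def
  have hd : ∀ v ∈ (Set.univ : Set ℝ), HasDerivWithinAt φ (φ' v) Set.univ v := by
    intro v _
    exact (((Real.hasDerivAt_arctan (v/t)).comp v
      ((hasDerivAt_id v).div_const t)).const_mul (-2)).hasDerivWithinAt
  have hinj : Set.InjOn φ Set.univ := by
    intro a _ b _ hab
    simp only [hφdef] at hab
    have h1 : Real.arctan (a/t) = Real.arctan (b/t) := by linarith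
    have h2 := Real.arctan_injective h1
    field_simp [ht.ne'] at h2
    exact h2
  have himg : φ '' Set.univ = Set.Ioo (-π) π := by
    ext y
    simp only [Set.image_univ, Set.mem_range, Set.mem_Ioo]
    constructor
    · rintro ⟨v, rfl⟩
      have h1 := Real.arctan_lt_pi_div_two (v/t)
      have h2 := Real.neg_pi_div_two_lt_arctan (v/t)
      simp only [hφdef]
      constructor <;> nlinarith
    · intro hy
      refine ⟨t * Real.tan (-(y/2)), ?_⟩
      simp only [hφdef]
      rw [mul_div_cancel_left₀ _ ht.ne']
      rw [Real.arctan_tan (by linarith [hy.1, hy.2]) (by linarith [hy.1, hy.2])]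
      ring
  have hchg := MeasureTheory.integral_image_eq_integral_abs_deriv_smul
    MeasurableSet.univ hd hinj (F 1)
  rw [himg, Measure.restrict_univ] at hchg
  have hDint : (∫ v : ℝ, |φ' v| • F 1 (φ v))
      = ∫ v : ℝ, (2:ℝ) • ((t / (t^2+v^2)) • g (Complex.I * (v:ℂ))) := by
    congr 1
    funext v
    have h2 : (0:ℝ) < t^2+v^2 := by positivity
    have habs2 : |φ' v| = 2 * (t / (t^2 + v^2)) := by
      have hv : φ' v = -(2 * (t/(t^2+v^2))) := by
        simp only [hφ'def]
        field_simp
      rw [hv, abs_neg, _root_.abs_of_nonneg (by positivity)]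
    have hden : ((t:ℂ) + (v:ℂ)*Complex.I) ≠ 0 := by
      intro h
      have := congrArg Complex.re h
      simp at this
      exact ht.ne' this
    have hFv : F 1 (φ v) = g (Complex.I * (v:ℂ)) := by
      simp only [hFdef, hφdef]
      congr 1
      rw [Complex.ofReal_one, one_mul, exp_neg_two_arctan ht v]
      simp only [hwdef]
      have hsum : 1 + ((t:ℂ) - v*Complex.I)/((t:ℂ)+v*Complex.I)
          = 2*t/((t:ℂ)+v*Complex.I) := by
        field_simp
        ring
      have hsumne : 1 + ((t:ℂ) - v*Complex.I)/((t:ℂ)+v*Complex.I) ≠ 0 := by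
        rw [hsum]
        apply div_ne_zero _ hden
        norm_num
        exact_mod_cast ht.ne'
      rw [div_eq_iff hsumne, hsum]
      field_simp
      ring
    rw [habs2, hFv, mul_smul]
  rw [hDint, MeasureTheory.integral_smul] at hchg
  -- combine
  set J := ∫ v : ℝ, (t / (t^2+v^2)) • g (Complex.I * (v:ℂ)) with hJdef
  have hkey : (2:ℝ) • J = (2*π:ℝ) • g ↑t := by
    calc (2:ℝ) • J = ∫ x in Set.Ioo (-π) π, F 1 x := hchg.symm
    _ = ∫ x in Set.Ioc (-π) π, F 1 x := (MeasureTheory.integral_Ioc_eq_integral_Ioo).symm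
    _ = ∫ x in (-π)..π, F 1 x := (intervalIntegral.integral_of_le (by linarith)).symm
    _ = (2*π:ℝ) • g ↑t := hC
  have h2π : (2*π:ℝ) ≠ 0 := by positivity
  calc g ↑t = (1/(2*π)) • ((2*π:ℝ) • g ↑t) := by
        rw [smul_smul, one_div, inv_mul_cancel₀ h2π, one_smul]
  _ = (1/(2*π)) • ((2:ℝ) • J) := by rw [hkey]
  _ = (1/π) • J := by
        rw [smul_smul]
        congr 1
        field_simp
end

section
/- Let q ∈ (2,∞), let 0 < λ₁ < λ₂ < … diverge to ∞, and let A be the diagonal operator A e_k = λ_k e_k on ℓ^q. Suppose there is a constant C₁ such that for all G = (g_k) ∈ L²(ℝ₊; ℓ^q), ∫_0^∞ ( Σ_k ( ∫_0^t λ_k e^{-2λ_k(t-s)} |g_k(s)|² ds )^{q/2} )^{2/q} dt ≤ C₁² ∫_0^∞ (Σ_k |g_k(t)|^q)^{2/q} dt. Then the operator B = 2A on ℓ^{q/2} has deterministic maximal L¹-regularity: there is C₂ such that for all f = (f_k) ∈ L¹(ℝ₊; ℓ^{q/2}), ∫_0^∞ (Σ_k |∫_0^t 2λ_k e^{-2λ_k(t-s)}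 f_k(s) ds|^{q/2})^{2/q} dt ≤ C₂ ∫_0^∞ (Σ_k |f_k(s)|^{q/2})^{2/q} ds. -/
open MeasureTheory Real Set ENNReal

/-- if the stochastic maximal `L²`-regularity square-function estimate
holds for the diagonal operator `A e_k = λ_k e_k` on `ℓ^q` (`q > 2`), then `B = 2A`
has deterministic maximal `L¹`-regularity on `ℓ^{q/2}`. -/
theorem stochastic_L2_estimate_implies_deterministic_maximal_L1_regularity
    (q : ℝ) (hq : 2 < q)
    (lam : ℕ → ℝ) (hpos : 0 < lam 0) (hmono : StrictMono lam)
    (hdiv : Filter.Tendsto lam Filter.atTop Filter.atTop)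
    (C₁ : ℝ)
    -- hypothesis: the square-function estimate on `L²(ℝ₊; ℓ^q)`
    (hyp : ∀ g : ℕ → ℝ → ℝ, (∀ k, Measurable (g k)) →
      ∫⁻ t in Set.Ioi (0:ℝ),
          (∑' k : ℕ,
            (∫⁻ s in Set.Ioo 0 t,
                ENNReal.ofReal (lam k * Real.exp (-2 * lam k * (t - s)) * (g k s) ^ 2))
              ^ (q / 2)) ^ (2 / q)
        ≤ ENNReal.ofReal (C₁ ^ 2) *
          ∫⁻ t in Set.Ioi (0:ℝ),
            (∑' k : ℕ, ENNReal.ofReal |g k t| ^ q) ^ (2 / q)) :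
    -- conclusion: deterministic maximal `L¹`-regularity for `B = 2A` on `ℓ^{q/2}`
    ∃ C₂ : ℝ, 0 ≤ C₂ ∧ ∀ f : ℕ → ℝ → ℝ, (∀ k, Measurable (f k)) →
      ∫⁻ t in Set.Ioi (0:ℝ),
          (∑' k : ℕ,
            (ENNReal.ofReal
              |∫ s in Set.Ioo 0 t, 2 * lam k * Real.exp (-2 * lam k * (t - s)) * f k s|)
              ^ (q / 2)) ^ (2 / q)
        ≤ ENNReal.ofReal C₂ *
          ∫⁻ s in Set.Ioi (0:ℝ),
            (∑' k : ℕ, ENNReal.ofReal |f k s| ^ (q / 2)) ^ (2 / q) := by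
  have hq0 : (0:ℝ) < q := lt_trans two_pos hq
  have hlam : ∀ k, 0 < lam k := fun k =>
    lt_of_lt_of_le hpos (hmono.monotone (Nat.zero_le k))
  refine ⟨2 * C₁ ^ 2, by positivity, ?_⟩
  intro f hf
  set g : ℕ → ℝ → ℝ := fun k s => Real.sqrt |f k s| with hgdef
  have hgm : ∀ k, Measurable (g k) := fun k => Real.continuous_sqrt.measurable.comp (hf k).abs
  have hsq : ∀ k s, (g k s) ^ 2 = |f k s| := fun k s => Real.sq_sqrt (abs_nonneg _)
  -- key pointwise estimate
  have key : ∀ (t : ℝ) (k : ℕ),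
      ENNReal.ofReal
          |∫ s in Set.Ioo 0 t, 2 * lam k * Real.exp (-2 * lam k * (t - s)) * f k s|
        ≤ 2 * ∫⁻ s in Set.Ioo 0 t,
            ENNReal.ofReal (lam k * Real.exp (-2 * lam k * (t - s)) * (g k s) ^ 2) := by
    intro t k
    have h1 : ENNReal.ofReal
          |∫ s in Set.Ioo 0 t, 2 * lam k * Real.exp (-2 * lam k * (t - s)) * f k s|
        ≤ ∫⁻ s in Set.Ioo 0 t,
            ENNReal.ofReal |2 * lam k * Real.exp (-2 * lam k * (t - s)) * f k s| := by
      rw [← Real.enorm_eq_ofReal_abs]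
      refine (enorm_integral_le_lintegral_enorm _).trans (le_of_eq ?_)
      exact lintegral_congr fun s => Real.enorm_eq_ofReal_abs _
    refine h1.trans ?_
    rw [← lintegral_const_mul' 2 _ (by norm_num)]
    refine le_of_eq (lintegral_congr fun s => ?_)
    have habs : |2 * lam k * Real.exp (-2 * lam k * (t - s)) * f k s|
        = 2 * (lam k * Real.exp (-2 * lam k * (t - s)) * (g k s) ^ 2) := by
      rw [hsq k s, abs_mul, abs_of_pos (mul_pos (mul_pos two_pos (hlam k)) (Real.exp_pos _))]
      ring
    rw [habs, ENNReal.ofReal_mul (by norm_num : (0:ℝ) ≤ 2)]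
    norm_num
  -- abbreviations
  have hq2 : (0:ℝ) ≤ q / 2 := by positivity
  have h2q : (0:ℝ) ≤ 2 / q := by positivity
  have hmulone : (q / 2) * (2 / q) = 1 := by field_simp
  calc
    ∫⁻ t in Set.Ioi (0:ℝ),
        (∑' k : ℕ,
          (ENNReal.ofReal
            |∫ s in Set.Ioo 0 t, 2 * lam k * Real.exp (-2 * lam k * (t - s)) * f k s|)
            ^ (q / 2)) ^ (2 / q)
      ≤ ∫⁻ t in Set.Ioi (0:ℝ),
        (∑' k : ℕ,
          (2 * ∫⁻ s in Set.Ioo 0 t,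
            ENNReal.ofReal (lam k * Real.exp (-2 * lam k * (t - s)) * (g k s) ^ 2))
            ^ (q / 2)) ^ (2 / q) := by
        refine lintegral_mono fun t => ?_
        refine ENNReal.rpow_le_rpow ?_ h2q
        exact ENNReal.tsum_le_tsum fun k => ENNReal.rpow_le_rpow (key t k) hq2
    _ = 2 * ∫⁻ t in Set.Ioi (0:ℝ),
        (∑' k : ℕ,
          (∫⁻ s in Set.Ioo 0 t,
            ENNReal.ofReal (lam k * Real.exp (-2 * lam k * (t - s)) * (g k s) ^ 2))
            ^ (q / 2)) ^ (2 / q) := by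
        rw [← lintegral_const_mul' 2 _ (by norm_num)]
        refine lintegral_congr fun t => ?_
        have : ∀ k : ℕ,
            (2 * ∫⁻ s in Set.Ioo 0 t,
              ENNReal.ofReal (lam k * Real.exp (-2 * lam k * (t - s)) * (g k s) ^ 2))
              ^ (q / 2)
            = (2:ℝ≥0∞) ^ (q / 2) *
              (∫⁻ s in Set.Ioo 0 t,
                ENNReal.ofReal (lam k * Real.exp (-2 * lam k * (t - s)) * (g k s) ^ 2))
                ^ (q / 2) := fun k => ENNReal.mul_rpow_of_nonneg _ _ hq2
        rw [tsum_congr this, ENNReal.tsum_mul_left,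
          ENNReal.mul_rpow_of_nonneg _ _ h2q, ← ENNReal.rpow_mul, hmulone,
          ENNReal.rpow_one]
    _ ≤ 2 * (ENNReal.ofReal (C₁ ^ 2) *
          ∫⁻ t in Set.Ioi (0:ℝ),
            (∑' k : ℕ, ENNReal.ofReal |g k t| ^ q) ^ (2 / q)) := by
        exact mul_le_mul_right (hyp g hgm) 2
    _ = ENNReal.ofReal (2 * C₁ ^ 2) *
          ∫⁻ s in Set.Ioi (0:ℝ),
            (∑' k : ℕ, ENNReal.ofReal |f k s| ^ (q / 2)) ^ (2 / q) := by
        have hpt : ∀ (s : ℝ) (k : ℕ),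
            ENNReal.ofReal |g k s| ^ q = ENNReal.ofReal |f k s| ^ (q / 2) := by
          intro s k
          have : |g k s| = |f k s| ^ ((1:ℝ)/2) := by
            rw [abs_of_nonneg (Real.sqrt_nonneg _)]
            exact Real.sqrt_eq_rpow _
          rw [this, ← ENNReal.ofReal_rpow_of_nonneg (abs_nonneg _)
            (by norm_num : (0:ℝ) ≤ 1/2), ← ENNReal.rpow_mul,
            show (1/2:ℝ) * q = q / 2 by ring]
        rw [ENNReal.ofReal_mul (by norm_num : (0:ℝ) ≤ 2), ← mul_assoc]
        congr 1
        · norm_num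
        · exact lintegral_congr fun s =>
            congrArg (· ^ (2/q)) (tsum_congr fun k => hpt s k)
end
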